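/- Let m, n ≥ 1 and ε, η ≥ 1 be integers and let M(λ) be an (η+1)m × (ε+1)n matrix pencil over ℝ. Then (Λ_η(λ)^T ⊗ I_m)·M(λ)·(Λ_ε(λ) ⊗ I_n) = 0 holds identically if and only if there exist matrices B₁ ∈ ℝ^{(η+1)m × εn} and B₂ ∈ ℝ^{ηm × (ε+1)n} with M(λ) = B₁·(L_ε(λ) ⊗ I_n) + (L_η(λ)^T ⊗ I_m)·B₂; moreover, in this case the pair (B₁, B₂) is uniquely determined by M(λ). -/

import Mathlib

open Matrix Polynomial
open scoped Kronecker

noncomputable section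

/-- `Λ_j(λ)` as a `(j+1) × 1` matrix of real polynomials, with `i`-th entry `λ^{j-i}`. -/
def Lam (j : ℕ) : Matrix (Fin (j + 1)) (Fin 1) (Polynomial ℝ) :=
  Matrix.of fun i _ => X ^ (j - (i : ℕ))

/-- `L_κ(λ)`, the `κ × (κ+1)` pencil with `-1` on the diagonal and `λ` on the superdiagonal. -/
def Lk (κ : ℕ) : Matrix (Fin κ) (Fin (κ + 1)) (Polynomial ℝ) :=
  Matrix.of fun i j => if (j : ℕ) = (i : ℕ) then -1 else if (j : ℕ) = (i : ℕ) + 1 then X else 0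

/-- The matrix pencil `λ·A + B` as a matrix of real polynomials. -/
def pencilM {ρ γ : Type*} (A B : Matrix ρ γ ℝ) : Matrix ρ γ (Polynomial ℝ) :=
  Matrix.of fun i j => X * C (A i j) + C (B i j)

/-- The matrix polynomial `Σ_{i=0}^k Pc i · λ^i` as a matrix of real polynomials. -/
def polyOf (m n k : ℕ) (Pc : ℕ → Matrix (Fin m) (Fin n) ℝ) :
    Matrix (Fin m) (Fin n) (Polynomial ℝ) :=
  Matrix.of fun i j => ∑ t ∈ Finset.range (k + 1), X ^ t * C (Pc t i j)

namespace Stmt2Aux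

lemma sum_fin_eq' {α : Type*} [AddCommMonoid α] {N : ℕ} (g : Fin N → α) (v : ℕ)
    (P : Prop) [Decidable P] :
    (∑ j : Fin N, if P ∧ v = (j : ℕ) then g j else 0) =
      if h : P ∧ v < N then g ⟨v, h.2⟩ else 0 := by
  split_ifs with h
  · rw [Finset.sum_eq_single (⟨v, h.2⟩ : Fin N)]
    · simp [h.1]
    · intro b _ hb
      rw [if_neg]
      rintro ⟨-, hv⟩
      exact hb (Fin.ext hv.symm)
    · simp
  · refine Finset.sum_eq_zero fun j _ => if_neg ?_
    rintro ⟨hP, hv⟩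
    exact h ⟨hP, hv ▸ j.isLt⟩

lemma sum_fin_eq {α : Type*} [AddCommMonoid α] {N : ℕ} (g : Fin N → α) (v : ℕ) :
    (∑ j : Fin N, if v = (j : ℕ) then g j else 0) =
      if h : v < N then g ⟨v, h⟩ else 0 := by
  split_ifs with h
  · rw [Finset.sum_eq_single (⟨v, h⟩ : Fin N)]
    · simp
    · intro b _ hb
      rw [if_neg]
      intro hv
      exact hb (Fin.ext hv.symm)
    · simp
  · refine Finset.sum_eq_zero fun j _ => if_neg ?_
    intro hv
    exact h (hv ▸ j.isLt)

lemma pencil_eq_iff (a b a' b' : ℝ) :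
    X * C a + C b = X * C a' + C b' ↔ a = a' ∧ b = b' := by
  constructor
  · intro h
    constructor
    · have := congrArg (fun p => Polynomial.coeff p 1) h
      simpa using this
    · have := congrArg (fun p => Polynomial.coeff p 0) h
      simpa using this
  · rintro ⟨rfl, rfl⟩; rfl

lemma Lk_mul_Lam (κ : ℕ) : Lk κ * Lam κ = 0 := by
  ext i z
  rw [Matrix.mul_apply]
  have key : ∀ j : Fin (κ + 1), Lk κ i j * Lam κ j z =
      (if True ∧ (i : ℕ) = (j : ℕ) then -X ^ (κ - (i : ℕ)) else 0)
      + (if True ∧ (i : ℕ) + 1 = (j : ℕ) then X ^ (κ - (i : ℕ)) else 0) := by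
    intro j
    have hi := i.isLt
    simp only [Lk, Lam, Matrix.of_apply]
    by_cases h1 : (j : ℕ) = (i : ℕ)
    · rw [if_pos h1, if_pos ⟨trivial, h1.symm⟩, if_neg (by simp only [true_and]; omega),
        add_zero, h1, neg_one_mul]
    · rw [if_neg h1]
      by_cases h2 : (j : ℕ) = (i : ℕ) + 1
      · rw [if_pos h2, if_neg (by simp only [true_and]; omega), if_pos ⟨trivial, h2.symm⟩,
          zero_add, h2, ← pow_succ']
        congr 1
        omega
      · rw [if_neg h2, if_neg (by simp only [true_and]; omega),
          if_neg (by simp only [true_and]; omega), zero_mul, add_zero]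
  rw [Finset.sum_congr rfl fun j _ => key j, Finset.sum_add_distrib,
    sum_fin_eq', sum_fin_eq']
  rw [dif_pos ⟨trivial, by omega⟩, dif_pos ⟨trivial, by omega⟩]
  simp

variable {mm nn M N : ℕ}

def S (A : Matrix (Fin M × Fin mm) (Fin N × Fin nn) ℝ)
    (p : Fin mm) (q : Fin nn) (d r : ℕ) : ℝ :=
  ∑ a ∈ Finset.range r,
    if h : a ≤ d ∧ a < M ∧ d - a < N then A (⟨a, h.2.1⟩, p) (⟨d - a, h.2.2⟩, q) else 0

lemma S_succ (A : Matrix (Fin M × Fin mm) (Fin N × Fin nn) ℝ) (p q) (d r : ℕ) :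
    S A p q d (r + 1) = S A p q d r +
      if h : r ≤ d ∧ r < M ∧ d - r < N then A (⟨r, h.2.1⟩, p) (⟨d - r, h.2.2⟩, q) else 0 :=
  Finset.sum_range_succ _ r

lemma S_zero0 (A : Matrix (Fin M × Fin mm) (Fin N × Fin nn) ℝ) (p q) (d : ℕ) :
    S A p q d 0 = 0 :=
  Finset.sum_range_zero _

lemma S_zero1 (A : Matrix (Fin M × Fin mm) (Fin N × Fin nn) ℝ) (p q) {d r : ℕ}
    (h : r + N ≤ d + 1) : S A p q d r = 0 :=
  Finset.sum_eq_zero fun a ha => dif_neg (by simp only [Finset.mem_range] at ha; omega)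

lemma S_trunc (A : Matrix (Fin M × Fin mm) (Fin N × Fin nn) ℝ) (p q) {d r : ℕ}
    (h : d < r) : S A p q d r = S A p q d (d + 1) := by
  refine (Finset.sum_subset (Finset.range_subset_range.2 h) fun a _ ha => dif_neg ?_).symm
  simp only [Finset.mem_range] at ha
  omega

lemma S_eq_double (A : Matrix (Fin M × Fin mm) (Fin N × Fin nn) ℝ) (p q) (d : ℕ) :
    S A p q d M = ∑ i : Fin M, ∑ j : Fin N,
      if (i : ℕ) + (j : ℕ) = d then A (i, p) (j, q) else 0 := by
  rw [S, Finset.sum_range]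
  refine Finset.sum_congr rfl fun i _ => ?_
  have hi := i.isLt
  have : ∀ j : Fin N, (if (i : ℕ) + (j : ℕ) = d then A (i, p) (j, q) else 0) =
      (if ((i : ℕ) ≤ d) ∧ d - (i : ℕ) = (j : ℕ) then A (i, p) (j, q) else 0) := by
    intro j
    refine if_congr ?_ rfl rfl
    constructor <;> intro hc <;> [constructor; skip] <;> omega
  rw [Finset.sum_congr rfl fun j _ => this j, sum_fin_eq']
  by_cases hc : (i : ℕ) ≤ d ∧ d - (i : ℕ) < N
  · rw [dif_pos hc, dif_pos ⟨hc.1, hi, hc.2⟩]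
  · rw [dif_neg hc, dif_neg (by omega)]

lemma coeff_term (a b k : ℕ) (c d : ℝ) :
    (X ^ a * (X * C c + C d) * X ^ b).coeff k =
      (if a + b + 1 = k then c else 0) + (if a + b = k then d else 0) := by
  have : X ^ a * (X * C c + C d) * X ^ b =
      C c * X ^ (a + b + 1) + C d * X ^ (a + b) := by
    ring
  rw [this, C_mul_X_pow_eq_monomial, C_mul_X_pow_eq_monomial, coeff_add,
    coeff_monomial, coeff_monomial]

lemma t1 {m n ε η : ℕ} (B1 : Matrix (Fin (η+1) × Fin m) (Fin ε × Fin n) ℝ)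
    (i : Fin (η+1)) (p : Fin m) (j : Fin (ε+1)) (q : Fin n) :
    (B1.map C * (Lk ε ⊗ₖ (1 : Matrix (Fin n) (Fin n) (Polynomial ℝ)))) (i,p) (j,q) =
      X * C (if h : 1 ≤ (j:ℕ) then B1 (i,p) (⟨(j:ℕ)-1, by have := j.isLt; omega⟩, q) else 0)
      - C (if h : (j:ℕ) < ε then B1 (i,p) (⟨(j:ℕ),h⟩, q) else 0) := by
  rw [Matrix.mul_apply, Fintype.sum_prod_type]
  simp only [Matrix.kroneckerMap_apply, Matrix.map_apply, Matrix.one_apply, mul_ite, mul_one,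
    mul_zero, Finset.sum_ite_eq', Finset.mem_univ, if_true]
  have key : ∀ x : Fin ε, C (B1 (i,p) (x,q)) * Lk ε x j =
      (if (1 ≤ (j:ℕ)) ∧ (j:ℕ)-1 = (x:ℕ) then X * C (B1 (i,p) (x,q)) else 0)
      + (if (j:ℕ) = (x:ℕ) then -C (B1 (i,p) (x,q)) else 0) := by
    intro x
    simp only [Lk, Matrix.of_apply]
    by_cases h1 : (j:ℕ) = (x:ℕ)
    · rw [if_pos h1, if_pos h1, if_neg (by omega), mul_neg_one, zero_add]
    · rw [if_neg h1, if_neg h1]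
      by_cases h2 : (j:ℕ) = (x:ℕ)+1
      · rw [if_pos h2, if_pos (by omega : (1 ≤ (j:ℕ)) ∧ (j:ℕ)-1 = (x:ℕ)), add_zero, mul_comm]
      · rw [if_neg h2, if_neg (by omega), mul_zero, add_zero]
  rw [Finset.sum_congr rfl fun x _ => key x, Finset.sum_add_distrib, sum_fin_eq', sum_fin_eq]
  have hjlt := j.isLt
  by_cases hj1 : 1 ≤ (j:ℕ) <;> by_cases hj2 : (j:ℕ) < ε
  · rw [dif_pos (⟨hj1, by omega⟩ : (1 ≤ (j:ℕ)) ∧ (j:ℕ)-1 < ε), dif_pos hj2, dif_pos hj1,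
      dif_pos hj2]
    ring
  · rw [dif_pos (⟨hj1, by omega⟩ : (1 ≤ (j:ℕ)) ∧ (j:ℕ)-1 < ε), dif_neg hj2, dif_pos hj1,
      dif_neg hj2]
    simp
  · rw [dif_neg (by omega), dif_pos hj2, dif_neg hj1, dif_pos hj2]
    simp
  · rw [dif_neg (by omega), dif_neg hj2, dif_neg hj1, dif_neg hj2]
    simp

end Stmt2Aux

namespace Stmt2Aux

lemma t2 {m n ε η : ℕ} (B2 : Matrix (Fin η × Fin m) (Fin (ε+1) × Fin n) ℝ)
    (i : Fin (η+1)) (p : Fin m) (j : Fin (ε+1)) (q : Fin n) :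
    (((Lk η)ᵀ ⊗ₖ (1 : Matrix (Fin m) (Fin m) (Polynomial ℝ))) * B2.map C) (i,p) (j,q) =
      X * C (if h : 1 ≤ (i:ℕ) then B2 (⟨(i:ℕ)-1, by have := i.isLt; omega⟩, p) (j,q) else 0)
      - C (if h : (i:ℕ) < η then B2 (⟨(i:ℕ),h⟩, p) (j,q) else 0) := by
  rw [Matrix.mul_apply, Fintype.sum_prod_type]
  simp only [Matrix.kroneckerMap_apply, Matrix.map_apply, Matrix.one_apply,
    Matrix.transpose_apply, ite_mul, mul_ite, one_mul, zero_mul, mul_one, mul_zero,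
    Finset.sum_ite_eq, Finset.mem_univ, if_true]
  have key : ∀ x : Fin η, Lk η x i * C (B2 (x,p) (j,q)) =
      (if (1 ≤ (i:ℕ)) ∧ (i:ℕ)-1 = (x:ℕ) then X * C (B2 (x,p) (j,q)) else 0)
      + (if (i:ℕ) = (x:ℕ) then -C (B2 (x,p) (j,q)) else 0) := by
    intro x
    simp only [Lk, Matrix.of_apply]
    by_cases h1 : (i:ℕ) = (x:ℕ)
    · rw [if_pos h1, if_pos h1, if_neg (by omega), neg_one_mul, zero_add]
    · rw [if_neg h1, if_neg h1]
      by_cases h2 : (i:ℕ) = (x:ℕ)+1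
      · rw [if_pos h2, if_pos (by omega : (1 ≤ (i:ℕ)) ∧ (i:ℕ)-1 = (x:ℕ)), add_zero]
      · rw [if_neg h2, if_neg (by omega), zero_mul, add_zero]
  rw [Finset.sum_congr rfl fun x _ => key x, Finset.sum_add_distrib, sum_fin_eq', sum_fin_eq]
  have hilt := i.isLt
  by_cases hi1 : 1 ≤ (i:ℕ) <;> by_cases hi2 : (i:ℕ) < η
  · rw [dif_pos (⟨hi1, by omega⟩ : (1 ≤ (i:ℕ)) ∧ (i:ℕ)-1 < η), dif_pos hi2, dif_pos hi1,
      dif_pos hi2]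
    ring
  · rw [dif_pos (⟨hi1, by omega⟩ : (1 ≤ (i:ℕ)) ∧ (i:ℕ)-1 < η), dif_neg hi2, dif_pos hi1,
      dif_neg hi2]
    simp
  · rw [dif_neg (by omega), dif_pos hi2, dif_neg hi1, dif_pos hi2]
    simp
  · rw [dif_neg (by omega), dif_neg hi2, dif_neg hi1, dif_neg hi2]
    simp

end Stmt2Aux

namespace Stmt2Aux

lemma lhs_entry {m n ε η : ℕ} (Mx My : Matrix (Fin (η+1) × Fin m) (Fin (ε+1) × Fin n) ℝ)
    (z z' : Fin 1) (p : Fin m) (q : Fin n) :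
    (((Lam η)ᵀ ⊗ₖ (1 : Matrix (Fin m) (Fin m) (Polynomial ℝ))) * pencilM Mx My *
        (Lam ε ⊗ₖ (1 : Matrix (Fin n) (Fin n) (Polynomial ℝ)))) (z,p) (z',q) =
      ∑ i : Fin (η+1), ∑ j : Fin (ε+1),
        X ^ (η-(i:ℕ)) * (X * C (Mx (i,p) (j,q)) + C (My (i,p) (j,q))) * X ^ (ε-(j:ℕ)) := by
  simp only [Matrix.mul_apply, Fintype.sum_prod_type, Matrix.kroneckerMap_apply,
    Matrix.transpose_apply, Matrix.one_apply, Lam, Matrix.of_apply, pencilM,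
    mul_ite, ite_mul, mul_one, mul_zero, one_mul, zero_mul,
    Finset.sum_ite_eq, Finset.sum_ite_eq', Finset.mem_univ, if_true,
    Finset.sum_mul, Finset.mul_sum]
  exact Finset.sum_comm

end Stmt2Aux


open Stmt2Aux in
theorem stmt2 (m n ε η : ℕ) (hm : 1 ≤ m) (hn : 1 ≤ n) (hε : 1 ≤ ε) (hη : 1 ≤ η)
    (Mx My : Matrix (Fin (η + 1) × Fin m) (Fin (ε + 1) × Fin n) ℝ) :
    ((Lam η)ᵀ ⊗ₖ (1 : Matrix (Fin m) (Fin m) (Polynomial ℝ))) * pencilM Mx My *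
        (Lam ε ⊗ₖ (1 : Matrix (Fin n) (Fin n) (Polynomial ℝ))) = 0 ↔
    ∃! B : Matrix (Fin (η + 1) × Fin m) (Fin ε × Fin n) ℝ ×
           Matrix (Fin η × Fin m) (Fin (ε + 1) × Fin n) ℝ,
      pencilM Mx My =
        B.1.map C * (Lk ε ⊗ₖ (1 : Matrix (Fin n) (Fin n) (Polynomial ℝ))) +
          ((Lk η)ᵀ ⊗ₖ (1 : Matrix (Fin m) (Fin m) (Polynomial ℝ))) * B.2.map C := by
  have key : ∀ B : Matrix (Fin (η + 1) × Fin m) (Fin ε × Fin n) ℝ ×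
           Matrix (Fin η × Fin m) (Fin (ε + 1) × Fin n) ℝ,
      (pencilM Mx My =
        B.1.map C * (Lk ε ⊗ₖ (1 : Matrix (Fin n) (Fin n) (Polynomial ℝ))) +
          ((Lk η)ᵀ ⊗ₖ (1 : Matrix (Fin m) (Fin m) (Polynomial ℝ))) * B.2.map C) ↔
      (∀ (i : Fin (η+1)) (p : Fin m) (j : Fin (ε+1)) (q : Fin n),
        (Mx (i,p) (j,q) =
          (if h : 1 ≤ (j:ℕ) then B.1 (i,p) (⟨(j:ℕ)-1, by have := j.isLt; omega⟩, q) else 0)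
          + (if h : 1 ≤ (i:ℕ) then B.2 (⟨(i:ℕ)-1, by have := i.isLt; omega⟩, p) (j,q) else 0))
        ∧ (My (i,p) (j,q) =
          -((if h : (j:ℕ) < ε then B.1 (i,p) (⟨(j:ℕ),h⟩, q) else 0)
          + (if h : (i:ℕ) < η then B.2 (⟨(i:ℕ),h⟩, p) (j,q) else 0)))) := by
    intro B
    have entry : ∀ (i : Fin (η+1)) (p : Fin m) (j : Fin (ε+1)) (q : Fin n),
        (B.1.map C * (Lk ε ⊗ₖ (1 : Matrix (Fin n) (Fin n) (Polynomial ℝ))) +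
          ((Lk η)ᵀ ⊗ₖ (1 : Matrix (Fin m) (Fin m) (Polynomial ℝ))) * B.2.map C) (i,p) (j,q) =
        X * C ((if h : 1 ≤ (j:ℕ) then B.1 (i,p) (⟨(j:ℕ)-1, by have := j.isLt; omega⟩, q) else 0)
          + (if h : 1 ≤ (i:ℕ) then B.2 (⟨(i:ℕ)-1, by have := i.isLt; omega⟩, p) (j,q) else 0))
        + C (-((if h : (j:ℕ) < ε then B.1 (i,p) (⟨(j:ℕ),h⟩, q) else 0)
          + (if h : (i:ℕ) < η then B.2 (⟨(i:ℕ),h⟩, p) (j,q) else 0))) := by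
      intro i p j q
      rw [Matrix.add_apply, t1, t2, C_add, C_neg, C_add]
      ring
    constructor
    · intro hEq i p j q
      have h1 := congrFun (congrFun hEq (i,p)) (j,q)
      rw [entry] at h1
      exact (pencil_eq_iff _ _ _ _).1 h1
    · intro h
      refine Matrix.ext fun x y => ?_
      obtain ⟨i, p⟩ := x
      obtain ⟨j, q⟩ := y
      rw [entry]
      exact (pencil_eq_iff _ _ _ _).2 ⟨(h i p j q).1, (h i p j q).2⟩
  constructor
  · intro hL
    have hco : ∀ (p : Fin m) (q : Fin n) (k : ℕ),
        (∑ i : Fin (η+1), ∑ j : Fin (ε+1),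
          ((if (η-(i:ℕ))+(ε-(j:ℕ))+1 = k then Mx (i,p) (j,q) else 0)
          + (if (η-(i:ℕ))+(ε-(j:ℕ)) = k then My (i,p) (j,q) else 0))) = 0 := by
      intro p q k
      have h1 : (∑ i : Fin (η+1), ∑ j : Fin (ε+1),
          X ^ (η-(i:ℕ)) * (X * C (Mx (i,p) (j,q)) + C (My (i,p) (j,q))) * X ^ (ε-(j:ℕ))) = 0 := by
        rw [← lhs_entry Mx My 0 0 p q, hL]
        rfl
      have h2 := congrArg (fun pol => Polynomial.coeff pol k) h1
      simpa only [Polynomial.finset_sum_coeff, coeff_term, Polynomial.coeff_zero] using h2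
    have H : ∀ (p : Fin m) (q : Fin n) (e : ℕ),
        S Mx p q (e+1) (η+1) + S My p q e (η+1) = 0 := by
      intro p q e
      by_cases he : e ≤ η + ε
      · calc S Mx p q (e+1) (η+1) + S My p q e (η+1)
            = ∑ i : Fin (η+1), ∑ j : Fin (ε+1),
              ((if (i:ℕ)+(j:ℕ) = e+1 then Mx (i,p) (j,q) else 0)
              + (if (i:ℕ)+(j:ℕ) = e then My (i,p) (j,q) else 0)) := by
              rw [S_eq_double, S_eq_double, ← Finset.sum_add_distrib]
              exact Finset.sum_congr rfl fun i _ => (Finset.sum_add_distrib).symm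
          _ = ∑ i : Fin (η+1), ∑ j : Fin (ε+1),
              ((if (η-(i:ℕ))+(ε-(j:ℕ))+1 = η+ε-e then Mx (i,p) (j,q) else 0)
              + (if (η-(i:ℕ))+(ε-(j:ℕ)) = η+ε-e then My (i,p) (j,q) else 0)) := by
              refine Finset.sum_congr rfl fun i _ => Finset.sum_congr rfl fun j _ => ?_
              have hi := i.isLt; have hj := j.isLt
              exact congrArg₂ (· + ·) (if_congr (by omega) rfl rfl) (if_congr (by omega) rfl rfl)
          _ = 0 := hco p q (η+ε-e)
      · rw [S_zero1 Mx p q (by omega), S_zero1 My p q (by omega), add_zero]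
    have H0 : ∀ (p : Fin m) (q : Fin n), S Mx p q 0 (η+1) = 0 := by
      intro p q
      calc S Mx p q 0 (η+1)
          = ∑ i : Fin (η+1), ∑ j : Fin (ε+1),
            ((if (i:ℕ)+(j:ℕ) = 0 then Mx (i,p) (j,q) else 0)
            + (if (η-(i:ℕ))+(ε-(j:ℕ)) = η+ε+1 then My (i,p) (j,q) else 0)) := by
            rw [S_eq_double]
            refine Finset.sum_congr rfl fun i _ => ?_
            rw [Finset.sum_add_distrib]
            have : ∀ j : Fin (ε+1), (if (η-(i:ℕ))+(ε-(j:ℕ)) = η+ε+1 then My (i,p) (j,q) else 0) = 0 := by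
              intro j
              have hi := i.isLt; have hj := j.isLt
              rw [if_neg (by omega)]
            rw [Finset.sum_congr rfl fun j _ => this j]
            simp
        _ = ∑ i : Fin (η+1), ∑ j : Fin (ε+1),
            ((if (η-(i:ℕ))+(ε-(j:ℕ))+1 = η+ε+1 then Mx (i,p) (j,q) else 0)
            + (if (η-(i:ℕ))+(ε-(j:ℕ)) = η+ε+1 then My (i,p) (j,q) else 0)) := by
            refine Finset.sum_congr rfl fun i _ => Finset.sum_congr rfl fun j _ => ?_
            have hi := i.isLt; have hj := j.isLt
            exact congrArg₂ (· + ·) (if_congr (by omega) rfl rfl) rfl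
        _ = 0 := hco p q (η+ε+1)
    have hSS : ∀ (A : Matrix (Fin (η+1) × Fin m) (Fin (ε+1) × Fin n) ℝ) (p : Fin m)
        (q : Fin n) (i : Fin (η+1)) (j : Fin (ε+1)),
        S A p q ((i:ℕ)+(j:ℕ)) ((i:ℕ)+1) = S A p q ((i:ℕ)+(j:ℕ)) (i:ℕ) + A (i,p) (j,q) := by
      intro A p q i j
      rw [S_succ, dif_pos ⟨by omega, by omega, by omega⟩]
      simp only [Nat.add_sub_cancel_left, Fin.eta]
    set Bd : Matrix (Fin (η + 1) × Fin m) (Fin ε × Fin n) ℝ ×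
           Matrix (Fin η × Fin m) (Fin (ε + 1) × Fin n) ℝ :=
      (Matrix.of fun ip jq => S Mx ip.2 jq.2 ((ip.1:ℕ)+(jq.1:ℕ)+1) ((ip.1:ℕ)+1)
        + S My ip.2 jq.2 ((ip.1:ℕ)+(jq.1:ℕ)) (ip.1:ℕ),
       Matrix.of fun ip jq => -(S My ip.2 jq.2 ((ip.1:ℕ)+(jq.1:ℕ)) ((ip.1:ℕ)+1)
        + S Mx ip.2 jq.2 ((ip.1:ℕ)+(jq.1:ℕ)+1) ((ip.1:ℕ)+1))) with hBd
    have hex : ∀ (i : Fin (η+1)) (p : Fin m) (j : Fin (ε+1)) (q : Fin n),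
        (Mx (i,p) (j,q) =
          (if h : 1 ≤ (j:ℕ) then Bd.1 (i,p) (⟨(j:ℕ)-1, by have := j.isLt; omega⟩, q) else 0)
          + (if h : 1 ≤ (i:ℕ) then Bd.2 (⟨(i:ℕ)-1, by have := i.isLt; omega⟩, p) (j,q) else 0))
        ∧ (My (i,p) (j,q) =
          -((if h : (j:ℕ) < ε then Bd.1 (i,p) (⟨(j:ℕ),h⟩, q) else 0)
          + (if h : (i:ℕ) < η then Bd.2 (⟨(i:ℕ),h⟩, p) (j,q) else 0))) := by
      intro i p j q
      have hilt := i.isLt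
      have hjlt := j.isLt
      constructor
      · by_cases hj : 1 ≤ (j:ℕ) <;> by_cases hi : 1 ≤ (i:ℕ)
        · rw [dif_pos hj, dif_pos hi]
          simp only [hBd, Matrix.of_apply]
          rw [show (i:ℕ) + (((⟨(j:ℕ)-1, by omega⟩ : Fin ε)):ℕ) + 1 = (i:ℕ)+(j:ℕ) from by
              simp; omega,
            show (i:ℕ) + (((⟨(j:ℕ)-1, by omega⟩ : Fin ε)):ℕ) = (i:ℕ)+(j:ℕ)-1 from by
              simp; omega,
            show (((⟨(i:ℕ)-1, by omega⟩ : Fin η)):ℕ) + (j:ℕ) + 1 = (i:ℕ)+(j:ℕ) from by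
              simp; omega,
            show (((⟨(i:ℕ)-1, by omega⟩ : Fin η)):ℕ) + (j:ℕ) = (i:ℕ)+(j:ℕ)-1 from by
              simp; omega,
            show (((⟨(i:ℕ)-1, by omega⟩ : Fin η)):ℕ) + 1 = (i:ℕ) from by simp; omega]
          have hs := hSS Mx p q i j
          linarith [hs]
        · rw [dif_pos hj, dif_neg hi]
          simp only [hBd, Matrix.of_apply]
          have hi0 : (i:ℕ) = 0 := by omega
          rw [show (i:ℕ) + (((⟨(j:ℕ)-1, by omega⟩ : Fin ε)):ℕ) + 1 = (i:ℕ)+(j:ℕ) from by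
              simp; omega,
            show (i:ℕ) + (((⟨(j:ℕ)-1, by omega⟩ : Fin ε)):ℕ) = (i:ℕ)+(j:ℕ)-1 from by
              simp; omega, hi0]
          have hs := hSS Mx p q i j
          rw [hi0] at hs
          have hz := S_zero0 My p q ((0:ℕ)+(j:ℕ)-1)
          rw [zero_add] at hs ⊢
          linarith [hs, S_zero0 Mx p q (j:ℕ), S_zero0 My p q ((j:ℕ)-1)]
        · rw [dif_neg hj, dif_pos hi]
          simp only [hBd, Matrix.of_apply]
          have hj0 : (j:ℕ) = 0 := by omega
          rw [show (((⟨(i:ℕ)-1, by omega⟩ : Fin η)):ℕ) + (j:ℕ) + 1 = (i:ℕ) from by simp; omega,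
            show (((⟨(i:ℕ)-1, by omega⟩ : Fin η)):ℕ) + (j:ℕ) = (i:ℕ)-1 from by simp [hj0],
            show (((⟨(i:ℕ)-1, by omega⟩ : Fin η)):ℕ) + 1 = (i:ℕ) from by simp; omega]
          have hH := H p q ((i:ℕ)-1)
          rw [show (i:ℕ)-1+1 = (i:ℕ) from by omega] at hH
          have ht1 : S My p q ((i:ℕ)-1) (i:ℕ) = S My p q ((i:ℕ)-1) (η+1) := by
            rw [S_trunc My p q (show (i:ℕ)-1 < (i:ℕ) from by omega),
              S_trunc My p q (show (i:ℕ)-1 < η+1 from by omega)]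
          have ht2 : S Mx p q (i:ℕ) (η+1) = S Mx p q (i:ℕ) ((i:ℕ)+1) := by
            rw [S_trunc Mx p q (show (i:ℕ) < η+1 from by omega),
              S_trunc Mx p q (show (i:ℕ) < (i:ℕ)+1 from by omega)]
          have hs := hSS Mx p q i j
          rw [hj0] at hs
          simp only [Nat.add_zero] at hs
          linarith [hH, ht1, ht2, hs]
        · rw [dif_neg hj, dif_neg hi]
          have hi0 : (i:ℕ) = 0 := by omega
          have hj0 : (j:ℕ) = 0 := by omega
          have hs := hSS Mx p q i j
          rw [hi0, hj0] at hs
          have h0 := H0 p q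
          have ht : S Mx p q 0 (η+1) = S Mx p q 0 1 := by
            rw [S_trunc Mx p q (show (0:ℕ) < η+1 from by omega),
              S_trunc Mx p q (show (0:ℕ) < 1 from by omega)]
          simp only [Nat.add_zero, Nat.zero_add] at hs
          linarith [hs, h0, ht, S_zero0 Mx p q 0]
      · by_cases hj : (j:ℕ) < ε <;> by_cases hi : (i:ℕ) < η
        · rw [dif_pos hj, dif_pos hi]
          simp only [hBd, Matrix.of_apply]
          rw [show (i:ℕ) + (((⟨(j:ℕ), hj⟩ : Fin ε)):ℕ) = (i:ℕ)+(j:ℕ) from by simp,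
            show (((⟨(i:ℕ), hi⟩ : Fin η)):ℕ) + (j:ℕ) = (i:ℕ)+(j:ℕ) from by simp,
            show (((⟨(i:ℕ), hi⟩ : Fin η)):ℕ) + 1 = (i:ℕ)+1 from by simp]
          have hs := hSS My p q i j
          linarith [hs]
        · rw [dif_pos hj, dif_neg hi]
          simp only [hBd, Matrix.of_apply]
          have hiη : (i:ℕ) = η := by omega
          rw [show (i:ℕ) + (((⟨(j:ℕ), hj⟩ : Fin ε)):ℕ) = (i:ℕ)+(j:ℕ) from by simp]
          have hH := H p q ((i:ℕ)+(j:ℕ))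
          have hs := hSS My p q i j
          have ht : S Mx p q ((i:ℕ)+(j:ℕ)+1) ((i:ℕ)+1) = S Mx p q ((i:ℕ)+(j:ℕ)+1) (η+1) := by
            rw [hiη]
          rw [hiη] at hH hs ⊢
          linarith [hH, hs, ht]
        · rw [dif_neg hj, dif_pos hi]
          simp only [hBd, Matrix.of_apply]
          have hjε : (j:ℕ) = ε := by omega
          rw [show (((⟨(i:ℕ), hi⟩ : Fin η)):ℕ) + (j:ℕ) = (i:ℕ)+(j:ℕ) from by simp,
            show (((⟨(i:ℕ), hi⟩ : Fin η)):ℕ) + 1 = (i:ℕ)+1 from by simp]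
          have hs := hSS My p q i j
          have hz1 : S Mx p q ((i:ℕ)+(j:ℕ)+1) ((i:ℕ)+1) = 0 :=
            S_zero1 Mx p q (by omega)
          have hz2 : S My p q ((i:ℕ)+(j:ℕ)) (i:ℕ) = 0 :=
            S_zero1 My p q (by omega)
          linarith [hs, hz1, hz2]
        · rw [dif_neg hj, dif_neg hi]
          have hiη : (i:ℕ) = η := by omega
          have hjε : (j:ℕ) = ε := by omega
          have hH := H p q ((i:ℕ)+(j:ℕ))
          have hs := hSS My p q i j
          have hz1 : S Mx p q ((i:ℕ)+(j:ℕ)+1) (η+1) = 0 :=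
            S_zero1 Mx p q (by omega)
          have hz2 : S My p q ((i:ℕ)+(j:ℕ)) (i:ℕ) = 0 :=
            S_zero1 My p q (by omega)
          rw [hiη] at hH hs hz2
          rw [hiη] at hz1
          linarith [hH, hs, hz1, hz2]
    have hexm : pencilM Mx My =
        Bd.1.map C * (Lk ε ⊗ₖ (1 : Matrix (Fin n) (Fin n) (Polynomial ℝ))) +
          ((Lk η)ᵀ ⊗ₖ (1 : Matrix (Fin m) (Fin m) (Polynomial ℝ))) * Bd.2.map C :=
      (key Bd).2 hex
    refine ⟨Bd, hexm, ?_⟩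
    intro B' hB'
    have ha := (key B').1 hB'
    have hd := hex
    have main : ∀ (i : ℕ),
        (∀ (hi : i < η+1) (p : Fin m) (q : Fin n) (j : Fin ε),
          B'.1 (⟨i,hi⟩,p) (j,q) = Bd.1 (⟨i,hi⟩,p) (j,q)) ∧
        (∀ (hi : i < η) (p : Fin m) (q : Fin n) (j : Fin (ε+1)),
          B'.2 (⟨i,hi⟩,p) (j,q) = Bd.2 (⟨i,hi⟩,p) (j,q)) := by
      intro i
      induction i with
      | zero =>
        have h1 : ∀ (hi : (0:ℕ) < η+1) (p : Fin m) (q : Fin n) (j : Fin ε),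
            B'.1 (⟨0,hi⟩,p) (j,q) = Bd.1 (⟨0,hi⟩,p) (j,q) := by
          intro hi p q j
          have ea := (ha ⟨0,hi⟩ p j.succ q).1
          have ed := (hd ⟨0,hi⟩ p j.succ q).1
          rw [dif_pos (show 1 ≤ ((j.succ : Fin (ε+1)) : ℕ) from by simp [Fin.val_succ]),
            dif_neg (show ¬ 1 ≤ (((⟨0,hi⟩ : Fin (η+1))) : ℕ) from by simp)] at ea ed
          simp only [Fin.val_succ, Nat.add_sub_cancel, Fin.eta, add_zero] at ea ed
          linarith [ea, ed]
        refine ⟨h1, ?_⟩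
        intro hi p q j
        have ea := (ha ⟨0, by omega⟩ p j q).2
        have ed := (hd ⟨0, by omega⟩ p j q).2
        rw [dif_pos (show (((⟨0, by omega⟩ : Fin (η+1))) : ℕ) < η from by simpa using hi)]
          at ea ed
        by_cases hjε : (j:ℕ) < ε
        · rw [dif_pos hjε] at ea ed
          have := h1 (by omega) p q ⟨(j:ℕ), hjε⟩
          linarith [ea, ed, this]
        · rw [dif_neg hjε] at ea ed
          linarith [ea, ed]
      | succ i ih =>
        have h1 : ∀ (hi : (i+1:ℕ) < η+1) (p : Fin m) (q : Fin n) (j : Fin ε),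
            B'.1 (⟨i+1,hi⟩,p) (j,q) = Bd.1 (⟨i+1,hi⟩,p) (j,q) := by
          intro hi p q j
          have ea := (ha ⟨i+1,hi⟩ p j.succ q).1
          have ed := (hd ⟨i+1,hi⟩ p j.succ q).1
          rw [dif_pos (show 1 ≤ ((j.succ : Fin (ε+1)) : ℕ) from by simp [Fin.val_succ]),
            dif_pos (show 1 ≤ (((⟨i+1,hi⟩ : Fin (η+1))) : ℕ) from by simp)] at ea ed
          simp only [Fin.val_succ, Nat.add_sub_cancel, Fin.eta] at ea ed
          have h2 := ih.2 (by omega) p q j.succ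
          linarith [ea, ed, h2]
        refine ⟨h1, ?_⟩
        intro hi p q j
        have ea := (ha ⟨i+1, by omega⟩ p j q).2
        have ed := (hd ⟨i+1, by omega⟩ p j q).2
        rw [dif_pos (show (((⟨i+1, by omega⟩ : Fin (η+1))) : ℕ) < η from by simpa using hi)]
          at ea ed
        by_cases hjε : (j:ℕ) < ε
        · rw [dif_pos hjε] at ea ed
          have := h1 (by omega) p q ⟨(j:ℕ), hjε⟩
          linarith [ea, ed, this]
        · rw [dif_neg hjε] at ea ed
          linarith [ea, ed]
    refine Prod.ext ?_ ?_
    · refine Matrix.ext fun x y => ?_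
      obtain ⟨i, p⟩ := x
      obtain ⟨j, q⟩ := y
      have := (main (i:ℕ)).1 i.isLt p q j
      simpa [Fin.eta] using this
    · refine Matrix.ext fun x y => ?_
      obtain ⟨i, p⟩ := x
      obtain ⟨j, q⟩ := y
      have := (main (i:ℕ)).2 i.isLt p q j
      simpa [Fin.eta] using this
  · rintro ⟨B, hB, -⟩
    have hz1 : (Lk ε ⊗ₖ (1 : Matrix (Fin n) (Fin n) (Polynomial ℝ))) *
        (Lam ε ⊗ₖ (1 : Matrix (Fin n) (Fin n) (Polynomial ℝ))) = 0 := by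
      rw [← Matrix.mul_kronecker_mul, Lk_mul_Lam, Matrix.one_mul, Matrix.zero_kronecker]
    have hz2 : ((Lam η)ᵀ ⊗ₖ (1 : Matrix (Fin m) (Fin m) (Polynomial ℝ))) *
        ((Lk η)ᵀ ⊗ₖ (1 : Matrix (Fin m) (Fin m) (Polynomial ℝ))) = 0 := by
      rw [← Matrix.mul_kronecker_mul, ← Matrix.transpose_mul, Lk_mul_Lam,
        Matrix.transpose_zero, Matrix.one_mul, Matrix.zero_kronecker]
    rw [hB, Matrix.mul_add, Matrix.add_mul]
    have e1 : ((Lam η)ᵀ ⊗ₖ (1 : Matrix (Fin m) (Fin m) (Polynomial ℝ))) *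
        (B.1.map C * (Lk ε ⊗ₖ (1 : Matrix (Fin n) (Fin n) (Polynomial ℝ)))) *
        (Lam ε ⊗ₖ (1 : Matrix (Fin n) (Fin n) (Polynomial ℝ))) = 0 := by
      rw [Matrix.mul_assoc, Matrix.mul_assoc, hz1, Matrix.mul_zero, Matrix.mul_zero]
    have e2 : ((Lam η)ᵀ ⊗ₖ (1 : Matrix (Fin m) (Fin m) (Polynomial ℝ))) *
        (((Lk η)ᵀ ⊗ₖ (1 : Matrix (Fin m) (Fin m) (Polynomial ℝ))) * B.2.map C) *
        (Lam ε ⊗ₖ (1 : Matrix (Fin n) (Fin n) (Polynomial ℝ))) = 0 := by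
      rw [← Matrix.mul_assoc, hz2, Matrix.zero_mul, Matrix.zero_mul]
    rw [e1, e2, add_zero]
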